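/- For every even nonnegative integer i, the convolution sum ∑_{j even, 0 ≤ j ≤ i} a_j · b_{i-j} equals (1/4)·b_{i+2}, where a_i = (1/(i+2))·C(i, i/2) and b_i = C(i, i/2). -/

import Mathlib

open MeasureTheory ProbabilityTheory Finset

noncomputable def aCoef (i : ℕ) : ℝ := (1 / ((i : ℝ) + 2)) * (i.choose (i / 2) : ℝ)

noncomputable def bCoef (i : ℕ) : ℝ := (i.choose (i / 2) : ℝ)

noncomputable def cB (n : ℕ) : ℝ := ((2 * n).choose n : ℝ)

lemma cB_rec (m : ℕ) : ((m : ℝ) + 1) * cB (m + 1) = (4 * m + 2) * cB m := by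
  have h := Nat.succ_mul_centralBinom_succ m
  have h2 : ((m + 1) * Nat.centralBinom (m + 1) : ℝ) = (2 * (2 * m + 1) * Nat.centralBinom m : ℝ) := by
    exact_mod_cast congrArg (Nat.cast : ℕ → ℝ) h
  simp only [Nat.centralBinom] at h2
  unfold cB
  push_cast at h2 ⊢
  linarith

lemma sym (N : ℕ) :
    2 * ∑ m ∈ range (N + 1), (m : ℝ) * cB m * cB (N - m)
      = N * ∑ m ∈ range (N + 1), cB m * cB (N - m) := by
  have h := Finset.sum_range_reflect (fun m => (m : ℝ) * cB m * cB (N - m)) (N + 1)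
  rw [two_mul]
  nth_rewrite 1 [← h]
  rw [← Finset.sum_add_distrib, Finset.mul_sum]
  apply Finset.sum_congr rfl
  intro m hm
  simp only [Finset.mem_range] at hm
  have hm' : m ≤ N := Nat.lt_succ_iff.mp hm
  have h1 : N + 1 - 1 - m = N - m := by omega
  have h2 : N - (N - m) = m := by omega
  simp only [h1, h2]
  have h3 : ((N - m : ℕ) : ℝ) = (N : ℝ) - m := by
    push_cast [hm']; ring
  rw [h3]
  ring

lemma convA : ∀ n : ℕ, ∑ m ∈ range (n + 1), cB m * cB (n - m) = 4 ^ n := by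
  intro n
  induction n with
  | zero => simp [cB]
  | succ n ih =>
    have hsym := sym (n + 1)
    have hshift : ∑ m ∈ range (n + 2), (m : ℝ) * cB m * cB (n + 1 - m)
        = ∑ k ∈ range (n + 1), ((k : ℝ) + 1) * cB (k + 1) * cB (n - k) := by
      rw [Finset.sum_range_succ' (fun m => (m : ℝ) * cB m * cB (n + 1 - m)) (n + 1)]
      simp only [Nat.cast_zero, zero_mul, add_zero]
      apply Finset.sum_congr rfl
      intro k _
      have hk : n + 1 - (k + 1) = n - k := by omega
      rw [hk]
      push_cast
      ring
    have hrecsum : ∑ k ∈ range (n + 1), ((k : ℝ) + 1) * cB (k + 1) * cB (n - k)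
        = 4 * ∑ k ∈ range (n + 1), (k : ℝ) * cB k * cB (n - k)
          + 2 * ∑ k ∈ range (n + 1), cB k * cB (n - k) := by
      rw [Finset.mul_sum, Finset.mul_sum, ← Finset.sum_add_distrib]
      apply Finset.sum_congr rfl
      intro k _
      have h := cB_rec k
      rw [h]
      ring
    have hsymn := sym n
    rw [ih] at hsymn
    have key : ((n : ℝ) + 1) * ∑ m ∈ range (n + 2), cB m * cB (n + 1 - m)
        = ((n : ℝ) + 1) * 4 ^ (n + 1) := by
      rw [hshift, hrecsum, ih] at hsym
      push_cast at hsym ⊢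
      ring_nf
      ring_nf at hsym hsymn
      nlinarith [hsym, hsymn]
    have hn1 : ((n : ℝ) + 1) ≠ 0 := by positivity
    exact mul_left_cancel₀ hn1 key

theorem convolution_a_b (i : ℕ) (hi : Even i) :
    ∑ j ∈ (Finset.range (i + 1)).filter (fun j => Even j), aCoef j * bCoef (i - j)
      = (1 / 4) * bCoef (i + 2) := by
  obtain ⟨n, rfl⟩ := hi
  have hset : (Finset.range (n + n + 1)).filter (fun j => Even j)
      = (Finset.range (n + 1)).image (fun m => 2 * m) := by
    ext j
    simp only [Finset.mem_filter, Finset.mem_range, Finset.mem_image]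
    constructor
    · rintro ⟨hj, m, rfl⟩
      exact ⟨m, by omega, by omega⟩
    · rintro ⟨m, hm, rfl⟩
      exact ⟨by omega, m, by omega⟩
  rw [hset, Finset.sum_image (by intro a _ b _ h; simp only at h; omega)]
  have hpt : ∀ m ∈ Finset.range (n + 1),
      aCoef (2 * m) * bCoef (n + n - 2 * m)
        = (cB m - (1/4) * cB (m + 1)) * cB (n - m) := by
    intro m hm
    simp only [Finset.mem_range] at hm
    have hm' : m ≤ n := Nat.lt_succ_iff.mp hm
    have e1 : (2 * m) / 2 = m := by omega
    have e2 : n + n - 2 * m = 2 * (n - m) := by omega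
    have e3 : (2 * (n - m)) / 2 = n - m := by omega
    have ha : aCoef (2 * m) = cB m - (1/4) * cB (m + 1) := by
      have h := cB_rec m
      unfold aCoef cB
      rw [e1]
      have hne : (2 * (m : ℝ) + 2) ≠ 0 := by positivity
      unfold cB at h
      push_cast
      field_simp
      nlinarith [h]
    rw [ha, e2]
    unfold bCoef cB
    rw [e3]
  rw [Finset.sum_congr rfl hpt]
  have hshift2 : ∑ m ∈ range (n + 2), cB m * cB (n + 1 - m)
      = (∑ k ∈ range (n + 1), cB (k + 1) * cB (n - k)) + cB 0 * cB (n + 1) := by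
    rw [Finset.sum_range_succ' (fun m => cB m * cB (n + 1 - m)) (n + 1)]
    congr 1
    apply Finset.sum_congr rfl
    intro k _
    have : n + 1 - (k + 1) = n - k := by omega
    rw [this]
  have hA := convA n
  have hA1 := convA (n + 1)
  have hc0 : cB 0 = 1 := by simp [cB]
  rw [hA1, hc0, one_mul] at hshift2
  have hb : bCoef (n + n + 2) = cB (n + 1) := by
    unfold bCoef cB
    have e4 : n + n + 2 = 2 * (n + 1) := by omega
    have e5 : (n + n + 2) / 2 = n + 1 := by omega
    rw [e4] at e5 ⊢
    rw [e5]
  rw [hb]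
  have expand : ∑ m ∈ range (n + 1), (cB m - (1/4) * cB (m + 1)) * cB (n - m)
      = (∑ m ∈ range (n + 1), cB m * cB (n - m))
        - (1/4) * ∑ m ∈ range (n + 1), cB (m + 1) * cB (n - m) := by
    rw [Finset.mul_sum, ← Finset.sum_sub_distrib]
    apply Finset.sum_congr rfl
    intro m _
    ring
  rw [expand, hA]
  have h4 : (4 : ℝ) ^ (n + 1) = 4 * 4 ^ n := by ring
  linarith
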